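/- arXiv:2106.10825 — 2 statements merged into one kernel-verified Lean document; each statement's English description precedes it below -/
import Mathlib

section
/- Let $V$ be a finite-dimensional vector space of dimension $n$ and let $T_1,\dots,T_l \in \mathrm{End}(V)$. Extend each $T_i$ to $\wedge^* V$ as a derivation, and define the supertrace $\mathrm{str}(S) = \sum_{k=0}^n (-1)^k \mathrm{Tr}(S|_{\wedge^k V})$. If $l < n$, then $\mathrm{str}(T_1 T_2 \cdots T_l) = 0$. -/
/-- The supertrace of an endomorphism of the exterior algebra: the trace composed with
the grade involution (which acts by `(-1)^k` on the degree-`k` component), so that for a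
grading-preserving `S` it equals `∑ k, (-1)^k Tr (S|_{⋀^k V})`. -/
noncomputable def supertrace (V : Type*) [AddCommGroup V] [Module ℝ V]
    (S : Module.End ℝ (ExteriorAlgebra ℝ V)) : ℝ :=
  LinearMap.trace ℝ (ExteriorAlgebra ℝ V)
    ((CliffordAlgebra.involute (Q := (0 : QuadraticForm ℝ V))).toLinearMap ∘ₗ S)

namespace PatodiAux

open ExteriorAlgebra

variable {V : Type*} [AddCommGroup V] [Module ℝ V]

/-- grade involution as a linear endomorphism -/
noncomputable def inv0 (V : Type*) [AddCommGroup V] [Module ℝ V] :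
    Module.End ℝ (ExteriorAlgebra ℝ V) :=
  (CliffordAlgebra.involute (Q := (0 : QuadraticForm ℝ V))).toLinearMap

/-- creation operator -/
noncomputable def eps (v : V) : Module.End ℝ (ExteriorAlgebra ℝ V) :=
  LinearMap.mulLeft ℝ (ExteriorAlgebra.ι ℝ v)

/-- annihilation operator -/
noncomputable def ann (d : Module.Dual ℝ V) : Module.End ℝ (ExteriorAlgebra ℝ V) :=
  CliffordAlgebra.contractLeft (Q := (0 : QuadraticForm ℝ V)) d

lemma supertrace_eq (S : Module.End ℝ (ExteriorAlgebra ℝ V)) :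
    supertrace V S = LinearMap.trace ℝ (ExteriorAlgebra ℝ V) (inv0 V * S) := rfl

lemma supertrace_sum {α : Type*} (s : Finset α) (S : α → Module.End ℝ (ExteriorAlgebra ℝ V)) :
    supertrace V (∑ x ∈ s, S x) = ∑ x ∈ s, supertrace V (S x) := by
  simp_rw [supertrace_eq, Finset.mul_sum, map_sum]

lemma supertrace_add (S₁ S₂ : Module.End ℝ (ExteriorAlgebra ℝ V)) :
    supertrace V (S₁ + S₂) = supertrace V S₁ + supertrace V S₂ := by
  simp_rw [supertrace_eq, mul_add, map_add]

lemma inv0_mul_eps (v : V) : inv0 V * eps v = -(eps v * inv0 V) := by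
  refine LinearMap.ext fun x => ?_
  simp only [Module.End.mul_apply, LinearMap.neg_apply, inv0, eps, LinearMap.mulLeft_apply,
    AlgHom.toLinearMap_apply, map_mul, CliffordAlgebra.involute_ι, neg_mul]

lemma involute_contractLeft (d : Module.Dual ℝ V) (x : ExteriorAlgebra ℝ V) :
    CliffordAlgebra.involute (Q := (0 : QuadraticForm ℝ V))
        (CliffordAlgebra.contractLeft d x) =
      -(CliffordAlgebra.contractLeft d (CliffordAlgebra.involute x)) := by
  induction x using CliffordAlgebra.left_induction with
  | algebraMap r =>
      simp [CliffordAlgebra.contractLeft_algebraMap]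
  | add x y hx hy =>
      simp only [map_add, hx, hy, neg_add]
  | ι_mul x m hx =>
      rw [CliffordAlgebra.contractLeft_ι_mul, map_sub, map_smul, map_mul,
        CliffordAlgebra.involute_ι, hx, map_mul, CliffordAlgebra.involute_ι]
      simp only [neg_mul, map_neg, CliffordAlgebra.contractLeft_ι_mul, mul_neg, neg_neg, neg_sub]

lemma inv0_mul_ann (d : Module.Dual ℝ V) : inv0 V * ann d = -(ann d * inv0 V) := by
  refine LinearMap.ext fun x => ?_
  simpa only [Module.End.mul_apply, LinearMap.neg_apply, inv0, ann, AlgHom.toLinearMap_apply] using involute_contractLeft d x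

lemma ann_mul_eps (d : Module.Dual ℝ V) (v : V) :
    ann d * eps v = d v • (1 : Module.End ℝ (ExteriorAlgebra ℝ V)) - eps v * ann d := by
  refine LinearMap.ext fun x => ?_
  have h := CliffordAlgebra.contractLeft_ι_mul (Q := (0 : QuadraticForm ℝ V)) d v x
  simpa only [Module.End.mul_apply, LinearMap.sub_apply, LinearMap.smul_apply, Module.End.one_apply,
    eps, ann, LinearMap.mulLeft_apply] using h

lemma eps_mul_eps (v w : V) : eps v * eps w = -(eps w * eps v) := by
  refine LinearMap.ext fun x => ?_
  simp only [Module.End.mul_apply, LinearMap.neg_apply, eps, LinearMap.mulLeft_apply, ← mul_assoc]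
  rw [show ι ℝ v * ι ℝ w = -(ι ℝ w * ι ℝ v) from
    eq_neg_of_add_eq_zero_left (ι_add_mul_swap v w)]
  simp [neg_mul]

lemma commute_inv0_factor (w : V) (d : Module.Dual ℝ V) :
    Commute (inv0 V) (eps w * ann d) := by
  unfold Commute SemiconjBy
  calc inv0 V * (eps w * ann d) = (inv0 V * eps w) * ann d := by rw [mul_assoc]
    _ = -(eps w * inv0 V) * ann d := by rw [inv0_mul_eps]
    _ = -(eps w * (inv0 V * ann d)) := by rw [(neg_mul (eps w * inv0 V) (ann d) : -(eps w * inv0 V) * ann d = _), mul_assoc]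
    _ = -(eps w * -(ann d * inv0 V)) := by rw [inv0_mul_ann]
    _ = eps w * ann d * inv0 V := by rw [(mul_neg (eps w) (ann d * inv0 V) : eps w * -(ann d * inv0 V) = _), neg_neg, mul_assoc]

lemma commute_eps_factor (u w : V) (d : Module.Dual ℝ V) (hd : d u = 0) :
    Commute (eps u) (eps w * ann d) := by
  unfold Commute SemiconjBy
  have h1 : eps u * eps w = -(eps w * eps u) := eps_mul_eps u w
  have h2 : eps u * ann d = -(ann d * eps u) := by
    have := ann_mul_eps d u
    rw [hd, zero_smul, zero_sub] at this
    rw [this, neg_neg]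
  calc eps u * (eps w * ann d) = (eps u * eps w) * ann d := by rw [mul_assoc]
    _ = -(eps w * (eps u * ann d)) := by rw [h1, (neg_mul (eps w * eps u) (ann d) : -(eps w * eps u) * ann d = _), mul_assoc]
    _ = -(eps w * -(ann d * eps u)) := by rw [h2]
    _ = eps w * ann d * eps u := by rw [(mul_neg (eps w) (ann d * eps u) : eps w * -(ann d * eps u) = _), neg_neg, mul_assoc]

lemma str_odd_mul (X Y : Module.End ℝ (ExteriorAlgebra ℝ V))
    (hX : inv0 V * X = -(X * inv0 V)) :
    supertrace V (X * Y) = -supertrace V (Y * X) := by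
  rw [supertrace_eq, supertrace_eq, ← mul_assoc, hX, (neg_mul (X * inv0 V) Y : -(X * inv0 V) * Y = _), mul_assoc, map_neg,
    LinearMap.trace_mul_comm, ← mul_assoc]

/-- supertrace of a product of `l` creation-annihilation pairs avoiding mode `j` vanishes -/
lemma str_monomial {n l : ℕ} (e : Module.Basis (Fin n) ℝ V) (w : Fin l → V) (q : Fin l → Fin n)
    (j : Fin n) (hj : ∀ i, q i ≠ j) :
    supertrace V (List.ofFn fun i => eps (w i) * ann (e.coord (q i))).prod = 0 := by
  set A : Module.End ℝ (ExteriorAlgebra ℝ V) :=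
    (List.ofFn fun i => eps (w i) * ann (e.coord (q i))).prod with hA
  have hmem : ∀ x ∈ List.ofFn fun i => eps (w i) * ann (e.coord (q i)),
      ∃ (w' : V) (d' : Module.Dual ℝ V), d' (e j) = 0 ∧ x = eps w' * ann d' := by
    intro x hx
    rw [List.mem_ofFn] at hx
    obtain ⟨i, rfl⟩ := hx
    refine ⟨w i, e.coord (q i), ?_, rfl⟩
    rw [Module.Basis.coord_apply, Module.Basis.repr_self, Finsupp.single_apply, if_neg fun h => hj i h.symm]
  have hAeven : Commute (inv0 V) A := by
    apply Commute.list_prod_right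
    intro y hy
    obtain ⟨w', d', _, rfl⟩ := hmem y hy
    exact commute_inv0_factor w' d'
  have hAcomm : Commute (eps (e j)) A := by
    apply Commute.list_prod_right
    intro y hy
    obtain ⟨w', d', hd', rfl⟩ := hmem y hy
    exact commute_eps_factor (e j) w' d' hd'
  set εj := eps (e j : V)
  set cj := ann (e.coord j)
  have key1 : cj * εj + εj * cj = 1 := by
    rw [show cj * εj = e.coord j (e j) • (1 : Module.End ℝ (ExteriorAlgebra ℝ V)) - εj * cj from
      ann_mul_eps _ _]
    rw [Module.Basis.coord_apply, Module.Basis.repr_self, Finsupp.single_eq_same, one_smul]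
    abel
  have hXodd : inv0 V * (A * cj) = -((A * cj) * inv0 V) := by
    rw [← mul_assoc, hAeven.eq, mul_assoc, inv0_mul_ann, (mul_neg A (ann (e.coord j) * inv0 V) : A * -(ann (e.coord j) * inv0 V) = _), ← mul_assoc]
  have expand : A = A * cj * εj + A * εj * cj := by
    rw [mul_assoc, mul_assoc, ← mul_add, key1, mul_one]
  rw [expand, supertrace_add]
  rw [str_odd_mul (A * cj) εj hXodd]
  rw [show εj * (A * cj) = A * εj * cj by rw [← mul_assoc, hAcomm.eq]]
  ring

/-- the derivation `D` equals the normal-ordered sum of creation-annihilation pairs -/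
lemma D_eq {n : ℕ} (e : Module.Basis (Fin n) ℝ V) (T : Module.End ℝ V)
    (D : Module.End ℝ (ExteriorAlgebra ℝ V))
    (hder : ∀ (x y : ExteriorAlgebra ℝ V), D (x * y) = D x * y + x * D y)
    (hext : ∀ (v : V), D (ExteriorAlgebra.ι ℝ v) = ExteriorAlgebra.ι ℝ (T v)) :
    D = ∑ p : Fin n, eps (T (e p)) * ann (e.coord p) := by
  have hone : D 1 = 0 := by
    have h := hder 1 1
    simp only [mul_one, one_mul] at h
    exact (left_eq_add.mp h)
  refine LinearMap.ext fun x => ?_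
  induction x using CliffordAlgebra.left_induction with
  | algebraMap r =>
      have : (algebraMap ℝ (ExteriorAlgebra ℝ V)) r = r • 1 := by
        rw [Algebra.algebraMap_eq_smul_one]
      rw [this, map_smul, hone, smul_zero]
      rw [map_smul]
      simp only [LinearMap.sum_apply, Module.End.mul_apply, ann,
        CliffordAlgebra.contractLeft_one, map_zero, Finset.sum_const_zero, smul_zero]
  | add x y hx hy => rw [map_add, map_add, hx, hy]
  | ι_mul x m hx =>
      rw [hder (ExteriorAlgebra.ι ℝ m) x, hext m]
      have hrhs : (∑ p : Fin n, eps (T (e p)) * ann (e.coord p)) (ExteriorAlgebra.ι ℝ m * x)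
          = ExteriorAlgebra.ι ℝ (T m) * x
            + ExteriorAlgebra.ι ℝ m * ((∑ p : Fin n, eps (T (e p)) * ann (e.coord p)) x) := by
        simp only [LinearMap.sum_apply, Module.End.mul_apply, ann, eps, LinearMap.mulLeft_apply]
        have hterm : ∀ p : Fin n,
            ExteriorAlgebra.ι ℝ (T (e p)) *
              (CliffordAlgebra.contractLeft (Q := (0 : QuadraticForm ℝ V)) (e.coord p)
                (ExteriorAlgebra.ι ℝ m * x))
            = e.coord p m • (ExteriorAlgebra.ι ℝ (T (e p)) * x)
              + ExteriorAlgebra.ι ℝ m * (ExteriorAlgebra.ι ℝ (T (e p)) *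
                  (CliffordAlgebra.contractLeft (Q := (0 : QuadraticForm ℝ V)) (e.coord p) x)) := by
          intro p
          rw [CliffordAlgebra.contractLeft_ι_mul]
          rw [mul_sub, mul_smul_comm]
          rw [← mul_assoc, show ExteriorAlgebra.ι ℝ (T (e p)) * ExteriorAlgebra.ι ℝ m
            = -(ExteriorAlgebra.ι ℝ m * ExteriorAlgebra.ι ℝ (T (e p))) from
            eq_neg_of_add_eq_zero_left (ι_add_mul_swap _ _), neg_mul, mul_assoc]
          abel
        rw [Finset.sum_congr rfl fun p _ => hterm p, Finset.sum_add_distrib, ← Finset.mul_sum]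
        congr 1
        have : ∑ p : Fin n, e.coord p m • (ExteriorAlgebra.ι ℝ (T (e p)) * x)
            = (∑ p : Fin n, e.coord p m • ExteriorAlgebra.ι ℝ (T (e p))) * x := by
          rw [Finset.sum_mul]
          exact Finset.sum_congr rfl fun p _ => (smul_mul_assoc _ _ _).symm
        rw [this]
        have h2 : (∑ p : Fin n, e.coord p m • T (e p)) = T m := by
          simp_rw [← map_smul]
          rw [← map_sum]
          congr 1
          simp_rw [Module.Basis.coord_apply]
          exact e.sum_repr m
        have hsum : (∑ p : Fin n, e.coord p m • ExteriorAlgebra.ι ℝ (T (e p)))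
            = ExteriorAlgebra.ι ℝ (T m) := by
          calc (∑ p : Fin n, e.coord p m • ExteriorAlgebra.ι ℝ (T (e p)))
              = ExteriorAlgebra.ι ℝ (∑ p : Fin n, e.coord p m • T (e p)) := by
                rw [map_sum]
                simp_rw [map_smul]
            _ = ExteriorAlgebra.ι ℝ (T m) := by rw [h2]
        rw [hsum]
      rw [hrhs, hx]

/-- expanding a list product of sums -/
lemma prod_ofFn_sum {R : Type*} [Semiring R] {ι : Type*} [Fintype ι] :
    ∀ (l : ℕ) (A : Fin l → ι → R),
      (List.ofFn (fun i => ∑ q : ι, A i q)).prod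
        = ∑ f : Fin l → ι, (List.ofFn fun i => A i (f i)).prod := by
  intro l
  induction l with
  | zero =>
      intro A
      rw [List.ofFn_zero, List.prod_nil]
      rw [Fintype.sum_unique fun f : Fin 0 → ι => (List.ofFn fun i => A i (f i)).prod]
      rw [List.ofFn_zero, List.prod_nil]
  | succ l ih =>
      intro A
      rw [List.ofFn_succ, List.prod_cons, ih (fun i q => A i.succ q), Finset.sum_mul_sum]
      have h1 : (∑ p : ι × (Fin l → ι), A 0 p.1 * (List.ofFn fun k => A k.succ (p.2 k)).prod)
          = ∑ f : Fin (l + 1) → ι, (List.ofFn fun i => A i (f i)).prod := by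
        refine Fintype.sum_equiv (Fin.consEquiv fun _ : Fin (l + 1) => ι) _ _ ?_
        rintro ⟨x, g⟩
        rw [List.ofFn_succ, List.prod_cons]
        simp [Fin.consEquiv, Fin.cons_zero, Fin.cons_succ]
      rw [← h1, Fintype.sum_prod_type]

end PatodiAux

/-- **Patodi's vanishing lemma.** If `V` has dimension `n`, `T₁, …, T_l` are endomorphisms
of `V` extended to the exterior algebra `⋀^* V` as derivations `D₁, …, D_l`, and `l < n`,
then the supertrace of the composition `D₁ ∘ ⋯ ∘ D_l` vanishes. -/
theorem patodi_vanishing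
    (V : Type*) [AddCommGroup V] [Module ℝ V] [FiniteDimensional ℝ V]
    (n l : ℕ) (hdim : Module.finrank ℝ V = n)
    (T : Fin l → Module.End ℝ V)
    (D : Fin l → Module.End ℝ (ExteriorAlgebra ℝ V))
    (hder : ∀ i (x y : ExteriorAlgebra ℝ V), D i (x * y) = D i x * y + x * D i y)
    (hext : ∀ i (v : V), D i (ExteriorAlgebra.ι ℝ v) = ExteriorAlgebra.ι ℝ (T i v))
    (hl : l < n) :
    supertrace V ((List.ofFn D).prod) = 0 := by
  classical
  let e : Module.Basis (Fin n) ℝ V := (Module.finBasis ℝ V).reindex (finCongr hdim)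
  have hD : ∀ i, D i = ∑ p : Fin n, PatodiAux.eps (T i (e p)) * PatodiAux.ann (e.coord p) :=
    fun i => PatodiAux.D_eq e (T i) (D i) (hder i) (hext i)
  rw [show D = fun i => ∑ p : Fin n, PatodiAux.eps (T i (e p)) * PatodiAux.ann (e.coord p)
    from funext hD]
  rw [PatodiAux.prod_ofFn_sum l
    (fun i p => PatodiAux.eps (T i (e p)) * PatodiAux.ann (e.coord p))]
  rw [PatodiAux.supertrace_sum]
  refine Finset.sum_eq_zero fun f _ => ?_
  obtain ⟨j, hj⟩ : ∃ j : Fin n, ∀ i, f i ≠ j := by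
    by_contra h
    push_neg at h
    have hsurj : Function.Surjective f := fun j => h j
    have := Fintype.card_le_of_surjective f hsurj
    simp only [Fintype.card_fin] at this
    omega
  exact PatodiAux.str_monomial e (fun i => T i (e (f i))) f j hj
end

section
/- Let $V$ have dimension $n$ and $T_1,\dots,T_n \in \mathrm{End}(V)$, extended to $\wedge^* V$ as derivations. Then $\mathrm{str}(T_1\cdots T_n)$ is invariant under any permutation of the factors: for every permutation $\sigma$ of $\{1,\dots,n\}$, $\mathrm{str}(T_{\sigma(1)}\cdots T_{\sigma(n)}) = \mathrm{str}(T_1\cdots T_n)$. -/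
namespace SupertraceAux

variable {V : Type*} [AddCommGroup V] [Module ℝ V]

/-! ### Creation, annihilation and grading operators on the exterior algebra -/

noncomputable def Lop (v : V) : Module.End ℝ (ExteriorAlgebra ℝ V) :=
  LinearMap.mulLeft ℝ (ExteriorAlgebra.ι ℝ v)

noncomputable def Cop (d : Module.Dual ℝ V) : Module.End ℝ (ExteriorAlgebra ℝ V) :=
  CliffordAlgebra.contractLeft (Q := (0 : QuadraticForm ℝ V)) d

noncomputable def eps : Module.End ℝ (ExteriorAlgebra ℝ V) :=
  (CliffordAlgebra.involute (Q := (0 : QuadraticForm ℝ V))).toLinearMap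

lemma Lop_apply (v : V) (x : ExteriorAlgebra ℝ V) : Lop v x = ExteriorAlgebra.ι ℝ v * x := rfl

lemma Cop_apply (d : Module.Dual ℝ V) (x : ExteriorAlgebra ℝ V) :
    Cop d x = CliffordAlgebra.contractLeft (Q := (0 : QuadraticForm ℝ V)) d x := rfl

lemma eps_apply (x : ExteriorAlgebra ℝ V) :
    eps x = CliffordAlgebra.involute (Q := (0 : QuadraticForm ℝ V)) x := rfl

lemma endNeg_mul (a b : Module.End ℝ (ExteriorAlgebra ℝ V)) : -a * b = -(a * b) :=
  LinearMap.ext fun x => by simp only [Module.End.mul_apply, LinearMap.neg_apply]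

lemma endMul_neg (a b : Module.End ℝ (ExteriorAlgebra ℝ V)) : a * -b = -(a * b) :=
  LinearMap.ext fun x => by simp only [Module.End.mul_apply, LinearMap.neg_apply, map_neg]

/-! ### The canonical (anti)commutation relations -/

lemma cop_lop (d : Module.Dual ℝ V) (v : V) :
    Cop d * Lop v + Lop v * Cop d = d v • (1 : Module.End ℝ (ExteriorAlgebra ℝ V)) := by
  refine LinearMap.ext fun x => ?_
  simp only [LinearMap.add_apply, Module.End.mul_apply, Lop_apply, Cop_apply,
    LinearMap.smul_apply, Module.End.one_apply]
  rw [CliffordAlgebra.contractLeft_ι_mul]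
  abel

lemma lop_lop (v w : V) : Lop (V := V) v * Lop w = -(Lop w * Lop v) := by
  refine LinearMap.ext fun x => ?_
  simp only [Module.End.mul_apply, Lop_apply, LinearMap.neg_apply, ← mul_assoc]
  rw [eq_neg_of_add_eq_zero_left (ExteriorAlgebra.ι_add_mul_swap v w), neg_mul]

lemma cop_cop (d d' : Module.Dual ℝ V) : Cop (V := V) d * Cop d' = -(Cop d' * Cop d) := by
  refine LinearMap.ext fun x => ?_
  simp only [Module.End.mul_apply, Cop_apply, LinearMap.neg_apply]
  exact CliffordAlgebra.contractLeft_comm _ _ _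

lemma eps_lop (v : V) : eps * Lop v = -(Lop v * eps) := by
  refine LinearMap.ext fun x => ?_
  simp only [Module.End.mul_apply, Lop_apply, eps_apply, LinearMap.neg_apply, map_mul,
    CliffordAlgebra.involute_ι, neg_mul]

lemma eps_cop (d : Module.Dual ℝ V) : eps * Cop d = -(Cop d * eps) := by
  refine LinearMap.ext fun x => ?_
  simp only [Module.End.mul_apply, Cop_apply, eps_apply, LinearMap.neg_apply]
  induction x using CliffordAlgebra.left_induction with
  | algebraMap r =>
      simp [CliffordAlgebra.contractLeft_algebraMap]
  | add x y hx hy => simp only [map_add, hx, hy, neg_add]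
  | ι_mul x m hx =>
      rw [map_mul (CliffordAlgebra.involute (Q := (0 : QuadraticForm ℝ V))),
        CliffordAlgebra.involute_ι, neg_mul, map_neg, neg_neg,
        CliffordAlgebra.contractLeft_ι_mul, CliffordAlgebra.contractLeft_ι_mul, map_sub,
        map_smul, map_mul, CliffordAlgebra.involute_ι, hx]
      simp only [mul_neg, neg_neg, neg_mul]

/-! ### The supertrace as a linear functional, and its (anti)cyclicity -/

noncomputable def strF : Module.End ℝ (ExteriorAlgebra ℝ V) →ₗ[ℝ] ℝ :=
  (LinearMap.trace ℝ (ExteriorAlgebra ℝ V)) ∘ₗ (LinearMap.mulLeft ℝ (eps (V := V)))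

lemma supertrace_eq (S : Module.End ℝ (ExteriorAlgebra ℝ V)) :
    supertrace V S = strF S := rfl

lemma strF_eq (S : Module.End ℝ (ExteriorAlgebra ℝ V)) :
    strF S = LinearMap.trace ℝ (ExteriorAlgebra ℝ V) (eps * S) := rfl

lemma str_mul_comm (A B : Module.End ℝ (ExteriorAlgebra ℝ V))
    (hA : eps * A = A * eps) : strF (A * B) = strF (B * A) := by
  rw [strF_eq, strF_eq, ← mul_assoc, hA, ← mul_assoc, mul_assoc,
    LinearMap.trace_mul_comm]

lemma str_anticomm (A B : Module.End ℝ (ExteriorAlgebra ℝ V))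
    (hA : eps * A = -(A * eps)) : strF (A * B) + strF (B * A) = 0 := by
  have h2 : A * eps = -(eps * A) := by rw [hA, neg_neg]
  have key : LinearMap.trace ℝ (ExteriorAlgebra ℝ V) (eps * (B * A))
      = - LinearMap.trace ℝ (ExteriorAlgebra ℝ V) (eps * (A * B)) := by
    rw [← mul_assoc, LinearMap.trace_mul_comm, ← mul_assoc, h2, endNeg_mul, mul_assoc, map_neg]
  rw [strF_eq, strF_eq, key, add_neg_cancel]

/-! ### Letters and words built from a basis -/

section Letters

variable {n : ℕ} (e : Module.Basis (Fin n) ℝ V)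

noncomputable def letter (p : Fin n × Fin n) : Module.End ℝ (ExteriorAlgebra ℝ V) :=
  Lop (e p.1) * Cop (e.coord p.2)

lemma coord_basis (a b : Fin n) : e.coord a (e b) = if b = a then 1 else 0 := by
  simp [Module.Basis.coord_apply, Module.Basis.repr_self, Finsupp.single_apply]

lemma cop_lop_of_ne {a b : Fin n} (h : b ≠ a) :
    Cop (e.coord a) * Lop (e b) = -(Lop (e b) * Cop (e.coord a)) := by
  have := cop_lop (e.coord a) (e b)
  rw [coord_basis, if_neg h, zero_smul] at this
  exact eq_neg_of_add_eq_zero_left this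

lemma cop_lop_self (r : Fin n) :
    Cop (e.coord r) * Lop (e r) = 1 - Lop (e r) * Cop (e.coord r) := by
  have := cop_lop (e.coord r) (e r)
  rw [coord_basis, if_pos rfl, one_smul] at this
  exact eq_sub_of_add_eq this

lemma lop_sq (r : Fin n) : Lop (V := V) (e r) * Lop (e r) = 0 := by
  have h := lop_lop (e r) (e r)
  have h2 : Lop (V := V) (e r) * Lop (e r) + Lop (e r) * Lop (e r) = 0 := by
    nth_rewrite 1 [h]; exact neg_add_cancel _
  have h3 : (2 : ℝ) • (Lop (V := V) (e r) * Lop (e r)) = 0 := by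
    rw [two_smul]; exact h2
  have := smul_eq_zero.mp h3
  simpa using this

lemma cop_comm_letter (r : Fin n) (p : Fin n × Fin n) (h : p.1 ≠ r) :
    Cop (e.coord r) * letter e p = letter e p * Cop (e.coord r) := by
  unfold letter
  rw [← mul_assoc, cop_lop_of_ne e h, endNeg_mul, mul_assoc, cop_cop (e.coord r) (e.coord p.2),
    endMul_neg, neg_neg, ← mul_assoc]

lemma lop_comm_letter (r : Fin n) (p : Fin n × Fin n) (h : p.2 ≠ r) :
    Lop (e r) * letter e p = letter e p * Lop (e r) := by
  unfold letter
  have h2 : Cop (e.coord p.2) * Lop (e r) = -(Lop (e r) * Cop (e.coord p.2)) :=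
    cop_lop_of_ne e (fun hh => h hh.symm)
  have h2' : Lop (e r) * Cop (e.coord p.2) = -(Cop (e.coord p.2) * Lop (e r)) := by
    rw [h2, neg_neg]
  rw [← mul_assoc, lop_lop (e r) (e p.1), endNeg_mul, mul_assoc, h2', endMul_neg, neg_neg,
    ← mul_assoc]

lemma eps_comm_letter (p : Fin n × Fin n) :
    eps * letter e p = letter e p * eps := by
  unfold letter
  rw [← mul_assoc, eps_lop, endNeg_mul, mul_assoc, eps_cop, endMul_neg, neg_neg, ← mul_assoc]

noncomputable def word (g : List (Fin n × Fin n)) : Module.End ℝ (ExteriorAlgebra ℝ V) :=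
  (g.map (letter e)).prod

@[simp] lemma word_nil : word (V := V) e [] = 1 := rfl

@[simp] lemma word_cons (p : Fin n × Fin n) (g : List (Fin n × Fin n)) :
    word e (p :: g) = letter e p * word e g := by
  unfold word; rw [List.map_cons, List.prod_cons]

lemma word_append (g₁ g₂ : List (Fin n × Fin n)) :
    word e (g₁ ++ g₂) = word e g₁ * word e g₂ := by
  simp [word, List.map_append, List.prod_append]

lemma comm_word (X : Module.End ℝ (ExteriorAlgebra ℝ V)) (g : List (Fin n × Fin n))
    (h : ∀ p ∈ g, X * letter e p = letter e p * X) : X * word e g = word e g * X := by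
  induction g with
  | nil => simp
  | cons p t ih =>
      rw [word_cons, ← mul_assoc, h p (List.mem_cons_self), mul_assoc,
        ih (fun q hq => h q (List.mem_cons_of_mem p hq)), ← mul_assoc]

lemma nop_letter (r : Fin n) (p : Fin n × Fin n) (h2 : p.2 ≠ r) :
    letter e (r, r) * letter e p - letter e p * letter e (r, r)
      = (if p.1 = r then (1 : ℝ) else 0) • letter e p := by
  by_cases hp : p.1 = r
  · rw [if_pos hp, one_smul]
    obtain ⟨b, a⟩ := p
    simp only at hp h2
    subst hp
    show letter e (b, b) * letter e (b, a) - letter e (b, a) * letter e (b, b) = letter e (b, a)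
    unfold letter
    simp only
    have hca : Cop (e.coord a) * Lop (e b) = -(Lop (e b) * Cop (e.coord a)) :=
      cop_lop_of_ne e (fun hh => h2 hh.symm)
    have key1 : Lop (e b) * Cop (e.coord b) * (Lop (e b) * Cop (e.coord a))
        = Lop (e b) * Cop (e.coord a) := by
      rw [mul_assoc, ← mul_assoc (Cop (e.coord b)), cop_lop_self, sub_mul, one_mul, mul_sub,
        ← mul_assoc, ← mul_assoc, lop_sq, zero_mul, zero_mul, sub_zero]
    have key2 : Lop (e b) * Cop (e.coord a) * (Lop (e b) * Cop (e.coord b)) = 0 := by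
      rw [mul_assoc, ← mul_assoc (Cop (e.coord a)), hca, endNeg_mul, endMul_neg, ← mul_assoc,
        ← mul_assoc, lop_sq, zero_mul, zero_mul, neg_zero]
    rw [key1, key2, sub_zero]
  · rw [if_neg hp, zero_smul, sub_eq_zero]
    show letter e (r, r) * letter e p = letter e p * letter e (r, r)
    have : letter e (r, r) = Lop (e r) * Cop (e.coord r) := rfl
    rw [this, mul_assoc, cop_comm_letter e r p hp, ← mul_assoc, lop_comm_letter e r p h2,
      mul_assoc]

lemma nop_word (r : Fin n) (g : List (Fin n × Fin n)) (hg : ∀ p ∈ g, p.2 ≠ r) :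
    letter e (r, r) * word e g - word e g * letter e (r, r)
      = (((g.filter fun p => p.1 = r).length : ℝ)) • word e g := by
  induction g with
  | nil => simp
  | cons p t ih =>
      have hp2 : p.2 ≠ r := hg p (List.mem_cons_self)
      have ht : ∀ q ∈ t, q.2 ≠ r := fun q hq => hg q (List.mem_cons_of_mem p hq)
      have hNp : letter e (r, r) * letter e p
          = letter e p * letter e (r, r) + (if p.1 = r then (1 : ℝ) else 0) • letter e p := by
        have := nop_letter e r p hp2
        rw [sub_eq_iff_eq_add] at this
        rw [this]; ring_nf
        abel
      have hNt : letter e (r, r) * word e t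
          = word e t * letter e (r, r) + (((t.filter fun p => p.1 = r).length : ℝ)) • word e t := by
        have := ih ht
        rw [sub_eq_iff_eq_add] at this
        rw [this]; abel
      have hfil : ((((p :: t).filter fun q => q.1 = r).length : ℕ) : ℝ)
          = (((t.filter fun q => q.1 = r).length : ℕ) : ℝ)
            + (if p.1 = r then (1 : ℝ) else 0) := by
        rw [List.filter_cons]
        by_cases hp1 : p.1 = r
        · simp [hp1]
        · simp [hp1]
      rw [word_cons, hfil]
      calc letter e (r, r) * (letter e p * word e t)
            - letter e p * word e t * letter e (r, r)
          = (letter e p * letter e (r, r) + (if p.1 = r then (1 : ℝ) else 0) • letter e p)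
              * word e t - letter e p * word e t * letter e (r, r) := by
            rw [← mul_assoc, hNp]
        _ = letter e p * (word e t * letter e (r, r)
              + ((t.filter fun q => q.1 = r).length : ℝ) • word e t)
            + (if p.1 = r then (1 : ℝ) else 0) • (letter e p * word e t)
            - letter e p * word e t * letter e (r, r) := by
            rw [add_mul, smul_mul_assoc, mul_assoc, hNt]
        _ = (((t.filter fun q => q.1 = r).length : ℝ)
              + (if p.1 = r then (1 : ℝ) else 0)) • (letter e p * word e t) := by
            rw [mul_add, mul_smul_comm, ← mul_assoc, add_smul]
            abel

/-! ### Vanishing of the supertrace of short words -/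

lemma str_word_eq_zero (g : List (Fin n × Fin n)) (hg : g.length < n) :
    strF (word e g) = 0 := by
  obtain ⟨r, hr⟩ : ∃ r : Fin n, r ∉ (g.map Prod.snd).toFinset := by
    by_contra h
    push_neg at h
    have huniv : (g.map Prod.snd).toFinset = Finset.univ := Finset.eq_univ_iff_forall.mpr h
    have hcard : (g.map Prod.snd).toFinset.card ≤ g.length := by
      refine le_trans (List.toFinset_card_le _) ?_
      simp
    rw [huniv] at hcard
    simp only [Finset.card_univ, Fintype.card_fin] at hcard
    omega
  have hr2 : ∀ p ∈ g, p.2 ≠ r := by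
    intro p hp h
    exact hr (List.mem_toFinset.mpr (List.mem_map.mpr ⟨p, hp, h⟩))
  by_cases hex : ∃ p ∈ g, p.1 = r
  · obtain ⟨p, hp, hp1⟩ := hex
    have hk : 0 < (g.filter fun q => q.1 = r).length := by
      refine List.length_pos_iff.mpr ?_
      intro hnil
      have : p ∈ g.filter fun q => q.1 = r := List.mem_filter.mpr ⟨hp, by simp [hp1]⟩
      rw [hnil] at this
      exact List.not_mem_nil this
    have hcomm := nop_word e r g hr2
    have h0 : strF (letter e (r, r) * word e g) = strF (word e g * letter e (r, r)) :=
      str_mul_comm _ _ (eps_comm_letter e (r, r))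
    have h1 := congrArg strF hcomm
    rw [map_sub, map_smul, h0, sub_self] at h1
    have hkR : ((g.filter fun q => q.1 = r).length : ℝ) ≠ 0 :=
      Nat.cast_ne_zero.mpr hk.ne'
    have := h1.symm
    rw [smul_eq_mul] at this
    exact (mul_eq_zero.mp this).resolve_left hkR
  · push_neg at hex
    have hLw : Lop (e r) * word e g = word e g * Lop (e r) :=
      comm_word e _ g (fun p hp => lop_comm_letter e r p (hr2 p hp))
    have hdecomp : word e g
        = Lop (e r) * (Cop (e.coord r) * word e g)
          + (Cop (e.coord r) * word e g) * Lop (e r) := by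
      have hsum : Lop (e r) * Cop (e.coord r) + Cop (e.coord r) * Lop (e r)
          = (1 : Module.End ℝ (ExteriorAlgebra ℝ V)) := by
        rw [cop_lop_self e r]; abel
      rw [mul_assoc, ← hLw, ← mul_assoc, ← mul_assoc, ← add_mul, hsum, one_mul]
    have := str_anticomm (Lop (e r)) (Cop (e.coord r) * word e g) (eps_lop (e r))
    rw [← map_add, ← hdecomp] at this
    exact this

end Letters

/-! ### Derivations are linear combinations of letters -/

lemma mul_involute (v : V) (x : ExteriorAlgebra ℝ V) :
    ExteriorAlgebra.ι ℝ v * CliffordAlgebra.involute (Q := (0 : QuadraticForm ℝ V)) x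
      = x * ExteriorAlgebra.ι ℝ v := by
  induction x using CliffordAlgebra.induction with
  | algebraMap r => simp [Algebra.commutes]
  | ι w =>
      rw [CliffordAlgebra.involute_ι, mul_neg]
      have h := ExteriorAlgebra.ι_add_mul_swap (R := ℝ) v w
      linear_combination (norm := noncomm_ring) -h
  | mul a b ha hb =>
      rw [map_mul (CliffordAlgebra.involute (Q := (0 : QuadraticForm ℝ V))), ← mul_assoc, ha,
        mul_assoc, hb, ← mul_assoc]
  | add a b ha hb => simp [mul_add, add_mul, ha, hb]

lemma contract_mul (d : Module.Dual ℝ V) (x y : ExteriorAlgebra ℝ V) :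
    CliffordAlgebra.contractLeft (Q := (0 : QuadraticForm ℝ V)) d (x * y)
      = CliffordAlgebra.contractLeft (Q := (0 : QuadraticForm ℝ V)) d x * y
        + CliffordAlgebra.involute (Q := (0 : QuadraticForm ℝ V)) x
          * CliffordAlgebra.contractLeft (Q := (0 : QuadraticForm ℝ V)) d y := by
  induction x using CliffordAlgebra.left_induction with
  | algebraMap r =>
      simp [CliffordAlgebra.contractLeft_algebraMap_mul, CliffordAlgebra.contractLeft_algebraMap]
  | add a b ha hb =>
      simp only [add_mul, map_add, ha, hb]
      abel
  | ι_mul x m hx =>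
      rw [mul_assoc, CliffordAlgebra.contractLeft_ι_mul, hx, CliffordAlgebra.contractLeft_ι_mul,
        map_mul (CliffordAlgebra.involute (Q := (0 : QuadraticForm ℝ V))),
        CliffordAlgebra.involute_ι]
      simp only [sub_mul, smul_mul_assoc, mul_add, neg_mul, mul_assoc]
      abel

section Canon

variable {n : ℕ} (e : Module.Basis (Fin n) ℝ V)

noncomputable def canon (T : Module.End ℝ V) : Module.End ℝ (ExteriorAlgebra ℝ V) :=
  ∑ a : Fin n, Lop (T (e a)) * Cop (e.coord a)

lemma canon_ι (T : Module.End ℝ V) (v : V) :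
    canon e T (ExteriorAlgebra.ι ℝ v) = ExteriorAlgebra.ι ℝ (T v) := by
  have h1 : canon e T (ExteriorAlgebra.ι ℝ v)
      = ∑ a : Fin n, e.repr v a • ExteriorAlgebra.ι ℝ (T (e a)) := by
    rw [canon, LinearMap.sum_apply]
    refine Finset.sum_congr rfl fun a _ => ?_
    rw [Module.End.mul_apply, Cop_apply, CliffordAlgebra.contractLeft_ι, Lop_apply,
      ← Algebra.commutes, ← Algebra.smul_def, Module.Basis.coord_apply]
  rw [h1]
  have h2 : ∑ a : Fin n, e.repr v a • ExteriorAlgebra.ι ℝ (T (e a))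
      = ExteriorAlgebra.ι ℝ (T (∑ a : Fin n, e.repr v a • e a)) := by
    rw [map_sum, map_sum]
    simp [map_smul]
  rw [h2, Module.Basis.sum_repr]

lemma canon_leibniz (T : Module.End ℝ V) (x y : ExteriorAlgebra ℝ V) :
    canon e T (x * y) = canon e T x * y + x * canon e T y := by
  simp only [canon, LinearMap.sum_apply, Module.End.mul_apply, Cop_apply, Lop_apply]
  have h : ∀ a : Fin n,
      ExteriorAlgebra.ι ℝ (T (e a))
        * CliffordAlgebra.contractLeft (Q := (0 : QuadraticForm ℝ V)) (e.coord a) (x * y)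
      = (ExteriorAlgebra.ι ℝ (T (e a))
          * CliffordAlgebra.contractLeft (Q := (0 : QuadraticForm ℝ V)) (e.coord a) x) * y
        + x * (ExteriorAlgebra.ι ℝ (T (e a))
          * CliffordAlgebra.contractLeft (Q := (0 : QuadraticForm ℝ V)) (e.coord a) y) := by
    intro a
    rw [contract_mul, mul_add, ← mul_assoc, ← mul_assoc, mul_involute, mul_assoc, mul_assoc]
  rw [Finset.sum_congr rfl fun a _ => h a, Finset.sum_add_distrib, ← Finset.sum_mul,
    ← Finset.mul_sum]

lemma deriv_one (D : Module.End ℝ (ExteriorAlgebra ℝ V))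
    (hD : ∀ x y, D (x * y) = D x * y + x * D y) : D 1 = 0 := by
  have := hD 1 1
  rw [one_mul, mul_one, one_mul] at this
  exact (left_eq_add.mp this)

lemma deriv_eq_canon (T : Module.End ℝ V) (D : Module.End ℝ (ExteriorAlgebra ℝ V))
    (hD : ∀ x y, D (x * y) = D x * y + x * D y)
    (hι : ∀ v : V, D (ExteriorAlgebra.ι ℝ v) = ExteriorAlgebra.ι ℝ (T v)) :
    D = canon e T := by
  refine LinearMap.ext fun x => ?_
  induction x using CliffordAlgebra.induction with
  | algebraMap r =>
      rw [Algebra.algebraMap_eq_smul_one, map_smul, map_smul, deriv_one D hD,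
        deriv_one (canon e T) (canon_leibniz e T)]
  | ι v => rw [hι, canon_ι]
  | mul a b ha hb => rw [hD, canon_leibniz, ha, hb]
  | add a b ha hb => rw [map_add, map_add, ha, hb]

lemma Lop_repr (v : V) : Lop (V := V) v = ∑ b : Fin n, e.repr v b • Lop (e b) := by
  refine LinearMap.ext fun x => ?_
  show ExteriorAlgebra.ι ℝ v * x = _
  rw [LinearMap.sum_apply]
  have h : ∀ b : Fin n, (e.repr v b • Lop (e b)) x
      = (e.repr v b • ExteriorAlgebra.ι ℝ (e b)) * x := by
    intro b
    rw [LinearMap.smul_apply, smul_mul_assoc]; rfl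
  rw [Finset.sum_congr rfl fun b _ => h b, ← Finset.sum_mul]
  congr 1
  conv_lhs => rw [← Module.Basis.sum_repr e v]
  rw [map_sum]
  simp [map_smul]

lemma canon_expand (T : Module.End ℝ V) :
    canon e T = ∑ p : Fin n × Fin n, e.repr (T (e p.2)) p.1 • letter e p := by
  rw [canon]
  have h : ∀ a : Fin n, Lop (T (e a)) * Cop (e.coord a)
      = ∑ b : Fin n, e.repr (T (e a)) b • letter e (b, a) := by
    intro a
    rw [Lop_repr e (T (e a)), Finset.sum_mul]
    exact Finset.sum_congr rfl fun b _ => smul_mul_assoc _ _ _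
  rw [Finset.sum_congr rfl fun a _ => h a, Fintype.sum_prod_type_right]

/-! ### The vanishing lemma for products of fewer than `n` derivations -/

lemma van_aux (l : List (Module.End ℝ (ExteriorAlgebra ℝ V))) :
    ∀ g : List (Fin n × Fin n),
    (∀ x ∈ l, ∃ c : Fin n × Fin n → ℝ, x = ∑ p : Fin n × Fin n, c p • letter e p) →
    g.length + l.length < n → strF (word e g * l.prod) = 0 := by
  induction l with
  | nil =>
      intro g _ hlen
      rw [List.prod_nil, mul_one]
      exact str_word_eq_zero e g (by simpa using hlen)
  | cons x t ih =>
      intro g hmem hlen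
      obtain ⟨c, hc⟩ := hmem x (List.mem_cons_self)
      have hword : ∀ p : Fin n × Fin n, word e (g ++ [p]) = word e g * letter e p := by
        intro p
        rw [word_append e g [p]]
        simp [word]
      have hprod : word e g * (x :: t).prod
          = ∑ p : Fin n × Fin n, c p • (word e (g ++ [p]) * t.prod) := by
        rw [List.prod_cons, hc, Finset.sum_mul, Finset.mul_sum]
        refine Finset.sum_congr rfl fun p _ => ?_
        rw [smul_mul_assoc, mul_smul_comm, hword, mul_assoc]
      rw [hprod, map_sum]
      refine Finset.sum_eq_zero fun p _ => ?_
      rw [map_smul, ih (g ++ [p]) (fun y hy => hmem y (List.mem_cons_of_mem x hy))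
        (by simp only [List.length_append, List.length_cons, List.length_nil] at hlen ⊢
            omega),
        smul_zero]

end Canon

/-! ### Derivations and the permutation argument -/

/-- A derivation of the exterior algebra extending an endomorphism of `V`. -/
def IsDeriv (D : Module.End ℝ (ExteriorAlgebra ℝ V)) : Prop :=
  (∀ x y, D (x * y) = D x * y + x * D y) ∧
    ∃ T : Module.End ℝ V, ∀ v : V, D (ExteriorAlgebra.ι ℝ v) = ExteriorAlgebra.ι ℝ (T v)

lemma IsDeriv.commutator {X Y : Module.End ℝ (ExteriorAlgebra ℝ V)}
    (hX : IsDeriv X) (hY : IsDeriv Y) : IsDeriv (X * Y - Y * X) := by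
  obtain ⟨hXl, TX, hXι⟩ := hX
  obtain ⟨hYl, TY, hYι⟩ := hY
  constructor
  · intro a b
    simp only [LinearMap.sub_apply, Module.End.mul_apply, hXl, hYl, map_add, sub_mul, mul_sub]
    abel
  · refine ⟨TX * TY - TY * TX, fun v => ?_⟩
    simp only [LinearMap.sub_apply, Module.End.mul_apply, hXι, hYι, map_sub]

section Main

variable {n : ℕ}

lemma van (e : Module.Basis (Fin n) ℝ V) (l : List (Module.End ℝ (ExteriorAlgebra ℝ V)))
    (hl : ∀ x ∈ l, IsDeriv x) (hlen : l.length < n) : strF l.prod = 0 := by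
  have hcoef : ∀ x ∈ l, ∃ c : Fin n × Fin n → ℝ,
      x = ∑ p : Fin n × Fin n, c p • letter e p := by
    intro x hx
    obtain ⟨hleib, T, hι⟩ := hl x hx
    exact ⟨fun p => e.repr (T (e p.2)) p.1,
      by rw [deriv_eq_canon e T x hleib hι, canon_expand]⟩
  have := van_aux e l [] hcoef (by simpa using hlen)
  simpa [word] using this

lemma perm_str (e : Module.Basis (Fin n) ℝ V)
    {l₁ l₂ : List (Module.End ℝ (ExteriorAlgebra ℝ V))} (hp : l₁.Perm l₂) :
    ∀ p : List (Module.End ℝ (ExteriorAlgebra ℝ V)),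
      (∀ D ∈ p ++ l₁, IsDeriv D) → (p ++ l₁).length = n →
      strF (p ++ l₁).prod = strF (p ++ l₂).prod := by
  induction hp with
  | nil => intro p _ _; rfl
  | cons x h ih =>
      rename_i t₁ t₂
      intro p hall hlen
      have h1 : p ++ x :: t₁ = (p ++ [x]) ++ t₁ := by simp
      have h2 : p ++ x :: t₂ = (p ++ [x]) ++ t₂ := by simp
      rw [h1, h2]
      refine ih (p ++ [x]) ?_ ?_
      · rw [← h1]; exact hall
      · rw [← h1]; exact hlen
  | swap x y t =>
      intro p hall hlen
      have hx : IsDeriv x := hall x (by simp)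
      have hy : IsDeriv y := hall y (by simp)
      have hdiff : (p ++ y :: x :: t).prod - (p ++ x :: y :: t).prod
          = (p ++ (y * x - x * y) :: t).prod := by
        simp only [List.prod_append, List.prod_cons, mul_sub, sub_mul, ← mul_assoc]
      have hvan : strF ((p ++ (y * x - x * y) :: t).prod) = 0 := by
        refine van e _ ?_ ?_
        · intro D hD
          rcases List.mem_append.mp hD with h | h
          · exact hall D (List.mem_append.mpr (Or.inl h))
          · rcases List.mem_cons.mp h with h | h
            · subst h; exact IsDeriv.commutator hy hx
            · exact hall D (by simp [h])
        · have := hlen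
          simp only [List.length_append, List.length_cons] at this ⊢
          omega
      have hsub := congrArg strF hdiff
      rw [map_sub, hvan] at hsub
      linarith
  | trans h₁ h₂ ih₁ ih₂ =>
      rename_i t₁ t₂ t₃
      intro p hall hlen
      rw [ih₁ p hall hlen]
      refine ih₂ p ?_ ?_
      · intro D hD
        rcases List.mem_append.mp hD with h | h
        · exact hall D (List.mem_append.mpr (Or.inl h))
        · exact hall D (List.mem_append.mpr (Or.inr (h₁.mem_iff.mpr h)))
      · simp only [List.length_append] at hlen ⊢
        rw [← h₁.length_eq]
        exact hlen

end Main

end SupertraceAux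

/-- If `dim V = n` and `T₁, …, T_n ∈ End(V)` are extended to the exterior algebra as
derivations `D₁, …, D_n`, then the supertrace of the composition `D₁ ⋯ D_n` is invariant
under any permutation of the factors. -/
theorem supertrace_perm_invariant
    (V : Type*) [AddCommGroup V] [Module ℝ V] [FiniteDimensional ℝ V]
    (n : ℕ) (hdim : Module.finrank ℝ V = n)
    (T : Fin n → Module.End ℝ V)
    (D : Fin n → Module.End ℝ (ExteriorAlgebra ℝ V))
    (hder : ∀ i (x y : ExteriorAlgebra ℝ V), D i (x * y) = D i x * y + x * D i y)
    (hext : ∀ i (v : V), D i (ExteriorAlgebra.ι ℝ v) = ExteriorAlgebra.ι ℝ (T i v))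
    (σ : Equiv.Perm (Fin n)) :
    supertrace V ((List.ofFn fun i => D (σ i)).prod) =
      supertrace V ((List.ofFn D).prod) := by
  classical
  have e : Module.Basis (Fin n) ℝ V := Module.finBasisOfFinrankEq ℝ V hdim
  have hperm : (List.ofFn fun i => D (σ i)).Perm (List.ofFn D) :=
    Equiv.Perm.ofFn_comp_perm σ D
  have hall : ∀ X ∈ ([] ++ List.ofFn fun i => D (σ i)), SupertraceAux.IsDeriv X := by
    intro X hX
    rw [List.nil_append, List.mem_ofFn] at hX
    obtain ⟨i, rfl⟩ := hX
    exact ⟨hder (σ i), T (σ i), hext (σ i)⟩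
  have hlen : (([] : List (Module.End ℝ (ExteriorAlgebra ℝ V)))
      ++ (List.ofFn fun i => D (σ i))).length = n := by simp
  have := SupertraceAux.perm_str e hperm [] hall hlen
  simpa [SupertraceAux.supertrace_eq] using this
end
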